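/- arXiv:2105.12957 — 3 statements merged into one kernel-verified Lean document; each statement's English description precedes it below -/
import Mathlib

section
/- Let P, h : ℝ → ℝ be continuous, v_b, v_u twice continuously differentiable solutions of w'' + P w = 0 with Wronskian v_b v_u' − v_b' v_u ≡ 1, ∫_{−∞}^0 |h v_b| < ∞, and let v(X) = −(∫₀^X h v_u)·v_b(X) + (∫_{−∞}^X h v_b)·v_u(X). Suppose there are α, β > 0 with lim_{X→∞} v_b(X) e^{√α X} = β√α and lim_{X→∞} v_u(X) e^{−√α X} = 1/(2αβ), suppose h is bounded on ℝ, and suppose ∫_{−∞}^∞ h(t) v_b(t) dt converges absolutely with value M_h. Then lim_{X→∞} v(X) e^{−√α X} = M_h /(2 α β). -/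
open MeasureTheory

/-- growth asymptotics of the variation-of-parameters solution of
`v'' + P v = h`: if `v_b(X) ~ β√α e^{-√α X}` and `v_u(X) ~ e^{√α X}/(2αβ)` as `X → ∞`,
`h` is bounded, and `∫ h v_b` converges absolutely with value `M_h`, then
`v(X) e^{-√α X} → M_h/(2αβ)` as `X → ∞`. -/
theorem stmt_6 (P h vb vu v : ℝ → ℝ) (α β M_h : ℝ)
    (hP : Continuous P) (hh : Continuous h)
    (hvb : ContDiff ℝ 2 vb) (hvu : ContDiff ℝ 2 vu)
    (hvbode : ∀ X, deriv (deriv vb) X + P X * vb X = 0)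
    (hvuode : ∀ X, deriv (deriv vu) X + P X * vu X = 0)
    (hWr : ∀ X, vb X * deriv vu X - deriv vb X * vu X = 1)
    (hint : IntegrableOn (fun t => h t * vb t) (Set.Iic 0))
    (hv : ∀ X, v X = -(∫ t in (0:ℝ)..X, h t * vu t) * vb X +
      (∫ t in Set.Iic X, h t * vb t) * vu X)
    (hα : 0 < α) (hβ : 0 < β)
    (hvblim : Filter.Tendsto (fun X => vb X * Real.exp (Real.sqrt α * X)) Filter.atTop
      (nhds (β * Real.sqrt α)))
    (hvulim : Filter.Tendsto (fun X => vu X * Real.exp (-(Real.sqrt α) * X)) Filter.atTop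
      (nhds (1 / (2 * α * β))))
    (hbdd : ∃ C, ∀ X, |h X| ≤ C)
    (hint2 : Integrable (fun t => h t * vb t))
    (hMh : ∫ t, h t * vb t = M_h) :
    Filter.Tendsto (fun X => v X * Real.exp (-(Real.sqrt α) * X)) Filter.atTop
      (nhds (M_h / (2 * α * β))) := by
  obtain ⟨C, hC⟩ := hbdd
  set s := Real.sqrt α with hs
  have hspos : 0 < s := Real.sqrt_pos.mpr hα
  have hC0 : 0 ≤ C := le_trans (abs_nonneg _) (hC 0)
  -- a uniform exponential bound on vu on [0, ∞)
  -- |vu t * exp(-s t)| is continuous and tends to a limit, hence bounded on [0,∞)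
  have hvucont : Continuous vu := hvu.continuous
  have hg : Continuous (fun t => |vu t * Real.exp (-s * t)|) :=
    (hvucont.mul (Real.continuous_exp.comp (continuous_const.mul continuous_id))).abs
  obtain ⟨T, hT⟩ : ∃ T : ℝ, ∀ t ≥ T, |vu t * Real.exp (-s * t)| ≤ |1 / (2 * α * β)| + 1 := by
    have := hvulim.abs.eventually (ge_mem_nhds (lt_add_one |1 / (2 * α * β)|))
    rw [Filter.eventually_atTop] at this
    obtain ⟨T, hT⟩ := this
    exact ⟨T, fun t ht => hT t ht⟩
  obtain ⟨K0, hK0⟩ : ∃ K0 : ℝ, ∀ t ∈ Set.Icc (0:ℝ) T, |vu t * Real.exp (-s * t)| ≤ K0 := by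
    rcases isCompact_Icc.exists_bound_of_continuousOn hg.continuousOn with ⟨K0, hK0⟩
    exact ⟨K0, fun t ht => by simpa using hK0 t ht⟩
  set K : ℝ := max K0 (|1 / (2 * α * β)| + 1) with hK
  have hKpos : 0 < K := lt_of_lt_of_le (by positivity) (le_max_right _ _)
  have hvuK : ∀ t : ℝ, 0 ≤ t → |vu t| ≤ K * Real.exp (s * t) := by
    intro t ht
    have hb : |vu t * Real.exp (-s * t)| ≤ K := by
      rcases le_total t T with h1 | h1
      · exact le_trans (hK0 t ⟨ht, h1⟩) (le_max_left _ _)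
      · exact le_trans (hT t h1) (le_max_right _ _)
    have : |vu t| * Real.exp (-s * t) ≤ K := by
      rwa [abs_mul, abs_of_pos (Real.exp_pos _)] at hb
    calc |vu t| = |vu t| * Real.exp (-s * t) * Real.exp (s * t) := by
          rw [mul_assoc, ← Real.exp_add]; ring_nf; simp
      _ ≤ K * Real.exp (s * t) :=
          mul_le_mul_of_nonneg_right this (le_of_lt (Real.exp_pos _))
  -- bound on the interval integral for X ≥ 0
  have hintbd : ∀ X : ℝ, 0 ≤ X →
      |∫ t in (0:ℝ)..X, h t * vu t| ≤ C * K * X * Real.exp (s * X) := by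
    intro X hX
    have hcont : Continuous (fun t => h t * vu t) := hh.mul hvucont
    have h1 : |∫ t in (0:ℝ)..X, h t * vu t| ≤ ∫ t in (0:ℝ)..X, |h t * vu t| :=
      intervalIntegral.abs_integral_le_integral_abs hX
    have h2 : ∫ t in (0:ℝ)..X, |h t * vu t| ≤ ∫ t in (0:ℝ)..X, C * K * Real.exp (s * X) := by
      apply intervalIntegral.integral_mono_on hX
      · exact (hcont.abs).intervalIntegrable _ _
      · exact intervalIntegrable_const
      · intro t ht
        rw [abs_mul]
        calc |h t| * |vu t| ≤ C * (K * Real.exp (s * t)) :=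
              mul_le_mul (hC t) (hvuK t ht.1) (abs_nonneg _) hC0
          _ ≤ C * K * Real.exp (s * X) := by
              rw [mul_assoc]
              apply mul_le_mul_of_nonneg_left _ hC0
              exact mul_le_mul_of_nonneg_left
                (Real.exp_le_exp.mpr (mul_le_mul_of_nonneg_left ht.2 hspos.le)) hKpos.le
    have h3 : ∫ t in (0:ℝ)..X, C * K * Real.exp (s * X) = C * K * Real.exp (s * X) * X := by
      simp [intervalIntegral.integral_const]
      ring
    calc |∫ t in (0:ℝ)..X, h t * vu t| ≤ ∫ t in (0:ℝ)..X, C * K * Real.exp (s * X) :=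
          le_trans h1 h2
      _ = C * K * X * Real.exp (s * X) := by rw [h3]; ring
  -- second term tends to M_h / (2αβ)
  have h2lim : Filter.Tendsto (fun X => ∫ t in Set.Iic X, h t * vb t) Filter.atTop
      (nhds M_h) := by
    have := (MeasureTheory.aecover_Iic
      (Filter.tendsto_id : Filter.Tendsto (id : ℝ → ℝ) Filter.atTop Filter.atTop)).integral_tendsto_of_countably_generated hint2
    rwa [hMh] at this
  have hterm2 : Filter.Tendsto
      (fun X => (∫ t in Set.Iic X, h t * vb t) * (vu X * Real.exp (-s * X)))
      Filter.atTop (nhds (M_h / (2 * α * β))) := by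
    have := h2lim.mul hvulim
    simpa [div_eq_mul_inv, mul_comm] using this
  -- first term tends to 0
  have hXexp : Filter.Tendsto (fun X : ℝ => X * Real.exp (-s * X)) Filter.atTop (nhds 0) := by
    have h1 : Filter.Tendsto (fun X : ℝ => (s * X) * Real.exp (-(s * X))) Filter.atTop
        (nhds 0) := by
      have := (Real.tendsto_pow_mul_exp_neg_atTop_nhds_zero 1).comp
        (Filter.tendsto_id.const_mul_atTop hspos)
      simpa [Function.comp_def] using this
    have := h1.const_mul (1/s)
    rw [mul_zero] at this
    refine this.congr (fun X => ?_)
    field_simp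
  have hterm1 : Filter.Tendsto
      (fun X => -(∫ t in (0:ℝ)..X, h t * vu t) * (vb X * Real.exp (-s * X)))
      Filter.atTop (nhds 0) := by
    have hbd : Filter.Tendsto
        (fun X => (C * K) * |vb X * Real.exp (s * X)| * (X * Real.exp (-s * X)))
        Filter.atTop (nhds 0) := by
      have := ((tendsto_const_nhds (x := C * K)).mul hvblim.abs).mul hXexp
      simpa using this
    apply squeeze_zero_norm' _ hbd
    filter_upwards [Filter.eventually_ge_atTop (0:ℝ)] with X hX
    have key : |(-(∫ t in (0:ℝ)..X, h t * vu t)) * (vb X * Real.exp (-s * X))|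
        ≤ C * K * X * Real.exp (s * X) * |vb X * Real.exp (-s * X)| := by
      rw [abs_mul, abs_neg]
      exact mul_le_mul_of_nonneg_right (hintbd X hX) (abs_nonneg _)
    refine le_trans key (le_of_eq ?_)
    have hexp : |vb X * Real.exp (-s * X)| = |vb X * Real.exp (s * X)| * Real.exp (-s * X) * Real.exp (-s * X) := by
      rw [abs_mul, abs_mul, abs_of_pos (Real.exp_pos _), abs_of_pos (Real.exp_pos _),
        mul_assoc, mul_assoc, ← Real.exp_add, ← Real.exp_add]
      ring_nf
    rw [hexp]
    have : Real.exp (s * X) * Real.exp (-s * X) = 1 := by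
      rw [← Real.exp_add]; ring_nf; simp
    calc C * K * X * Real.exp (s * X) * (|vb X * Real.exp (s * X)| * Real.exp (-s * X) * Real.exp (-s * X))
        = (C * K * |vb X * Real.exp (s * X)| * (X * Real.exp (-s * X))) * (Real.exp (s * X) * Real.exp (-s * X)) := by ring
      _ = C * K * |vb X * Real.exp (s * X)| * (X * Real.exp (-s * X)) := by rw [this, mul_one]
  -- combine
  have := hterm1.add hterm2
  rw [zero_add] at this
  refine this.congr (fun X => ?_)
  rw [hv X]
  ring
end

section
/- Let P, h : ℝ → ℝ be continuous, v_b, v_u twice continuously differentiable solutions of w'' + P w = 0 with Wronskian v_b v_u' − v_b' v_u ≡ 1, ∫_{−∞}^0 |h v_b| < ∞, and let v(X) = −(∫₀^X h v_u)·v_b(X) + (∫_{−∞}^X h v_b)·v_u(X). Let α, β > 0 with lim_{X→∞} v_b(X) e^{√α X} = β√α and lim_{X→∞} v_u(X) e^{−√α X} = 1/(2αβ). Assume there is a constant C with |h(X)| ≤ C e^{−√α X} and |v_b(X)| ≤ C e^{−√α X} for all X ≥ 0, that lim_{X→∞} h(X) e^{√α X} = h̄₀ exists, and that ∫_{−∞}^∞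 h v_b converges absolutely with value M_h = 0. Then lim_{X→∞} v(X) e^{√α X} / X = − h̄₀ /(2√α). -/
open MeasureTheory

open Filter Set in
lemma exp_integral_Ioi_aux (b a : ℝ) (hb : 0 < b) :
    ∫ t in Ioi a, Real.exp (-b * t) = Real.exp (-b * a) / b := by
  have hd : ∀ x ∈ Ici a, HasDerivAt (fun t => -Real.exp (-b * t) / b)
      (Real.exp (-b * x)) x := by
    intro x _
    have h1 : HasDerivAt (fun t : ℝ => -b * t) (-b) x := by
      simpa using (hasDerivAt_id x).const_mul (-b)
    have h2 := (h1.exp.neg.div_const b)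
    convert h2 using 1
    · rfl
    · rfl
    · rfl
    · rw [eq_div_iff hb.ne']; ring
  have hlim : Tendsto (fun t => -Real.exp (-b * t) / b) atTop (nhds 0) := by
    have h3 : Tendsto (fun t : ℝ => -b * t) atTop atBot := by
      have := tendsto_neg_atTop_atBot.comp (tendsto_id.const_mul_atTop hb)
      simpa [Function.comp_def, neg_mul] using this
    have := (Real.tendsto_exp_atBot.comp h3).neg.div_const b
    simpa [Function.comp_def] using this
  have key := integral_Ioi_of_hasDerivAt_of_tendsto'
    (f := fun t => -Real.exp (-b * t) / b) (f' := fun t => Real.exp (-b * t))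
    hd (exp_neg_integrableOn_Ioi a hb) hlim
  rw [key]; ring

open Filter Set in
lemma cesaro_int_aux (f : ℝ → ℝ) (hf : Continuous f) (L : ℝ)
    (hl : Tendsto f atTop (nhds L)) :
    Tendsto (fun X => (∫ t in (0:ℝ)..X, f t) / X) atTop (nhds L) := by
  rw [Metric.tendsto_atTop] at hl ⊢
  intro ε hε
  obtain ⟨X₀, hX₀⟩ := hl (ε/2) (by positivity)
  set M := max X₀ 0 with hM
  set A := |∫ t in (0:ℝ)..M, (f t - L)| with hA
  have hA0 : 0 ≤ A := abs_nonneg _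
  have hM0 : 0 ≤ M := le_max_right _ _
  refine ⟨max M (2*A/ε + 1), fun X hX => ?_⟩
  have hX1 : M ≤ X := le_trans (le_max_left _ _) hX
  have hX2 : 2*A/ε + 1 ≤ X := le_trans (le_max_right _ _) hX
  have hXpos : 0 < X := lt_of_lt_of_le (by positivity) hX2
  have hi1 : IntervalIntegrable (fun t => f t - L) volume 0 M :=
    (hf.sub continuous_const).intervalIntegrable _ _
  have hi2 : IntervalIntegrable (fun t => f t - L) volume M X :=
    (hf.sub continuous_const).intervalIntegrable _ _
  have key : (∫ t in (0:ℝ)..X, f t) / X - L = (∫ t in (0:ℝ)..X, (f t - L)) / X := by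
    rw [intervalIntegral.integral_sub (hf.intervalIntegrable _ _)
      (intervalIntegrable_const), intervalIntegral.integral_const]
    field_simp
    rw [sub_zero, smul_eq_mul]
  have hsplit : (∫ t in (0:ℝ)..X, (f t - L)) =
      (∫ t in (0:ℝ)..M, (f t - L)) + ∫ t in M..X, (f t - L) :=
    (intervalIntegral.integral_add_adjacent_intervals hi1 hi2).symm
  have hbd2 : |∫ t in M..X, (f t - L)| ≤ (ε/2) * |X - M| := by
    have := intervalIntegral.norm_integral_le_of_norm_le_const (a := M) (b := X)
      (C := ε/2) (f := fun t => f t - L) ?_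
    · simpa using this
    · intro x hx
      rw [Set.uIoc_of_le hX1] at hx
      have hx0 : X₀ ≤ x := le_trans (le_max_left _ _) hx.1.le
      have := hX₀ x hx0
      rw [Real.dist_eq] at this
      simpa using this.le
  have heq : ε * (2*A/ε + 1) = 2*A + ε := by field_simp
  have hle : ε * (2*A/ε + 1) ≤ ε * X := mul_le_mul_of_nonneg_left hX2 hε.le
  rw [Real.dist_eq, key, abs_div, abs_of_pos hXpos]
  rw [div_lt_iff₀ hXpos]
  calc |∫ t in (0:ℝ)..X, (f t - L)| ≤ A + (ε/2) * |X - M| := by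
        rw [hsplit]; exact (abs_add_le _ _).trans (by gcongr)
    _ < ε * X := by
        rw [abs_of_nonneg (by linarith)]
        nlinarith [mul_nonneg hε.le hM0]

/-- refined asymptotics (case `j = -1`) of the variation-of-parameters
solution of `v'' + P v = h` when the Melnikov quantity `M_h = ∫ h v_b` vanishes:
if `h(X) e^{√α X} → h̄₀` and `h`, `v_b` decay like `e^{-√α X}` on `[0,∞)`, then
`v(X) e^{√α X}/X → -h̄₀/(2√α)` as `X → ∞`. -/
theorem stmt_7 (P h vb vu v : ℝ → ℝ) (α β h₀ : ℝ)
    (hP : Continuous P) (hh : Continuous h)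
    (hvb : ContDiff ℝ 2 vb) (hvu : ContDiff ℝ 2 vu)
    (hvbode : ∀ X, deriv (deriv vb) X + P X * vb X = 0)
    (hvuode : ∀ X, deriv (deriv vu) X + P X * vu X = 0)
    (hWr : ∀ X, vb X * deriv vu X - deriv vb X * vu X = 1)
    (hint : IntegrableOn (fun t => h t * vb t) (Set.Iic 0))
    (hv : ∀ X, v X = -(∫ t in (0:ℝ)..X, h t * vu t) * vb X +
      (∫ t in Set.Iic X, h t * vb t) * vu X)
    (hα : 0 < α) (hβ : 0 < β)
    (hvblim : Filter.Tendsto (fun X => vb X * Real.exp (Real.sqrt α * X)) Filter.atTop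
      (nhds (β * Real.sqrt α)))
    (hvulim : Filter.Tendsto (fun X => vu X * Real.exp (-(Real.sqrt α) * X)) Filter.atTop
      (nhds (1 / (2 * α * β))))
    (hdecay : ∃ C : ℝ,
      (∀ X ≥ (0:ℝ), |h X| ≤ C * Real.exp (-(Real.sqrt α) * X)) ∧
      (∀ X ≥ (0:ℝ), |vb X| ≤ C * Real.exp (-(Real.sqrt α) * X)))
    (hhlim : Filter.Tendsto (fun X => h X * Real.exp (Real.sqrt α * X)) Filter.atTop
      (nhds h₀))
    (hint2 : Integrable (fun t => h t * vb t))
    (hMh : ∫ t, h t * vb t = 0) :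
    Filter.Tendsto (fun X => v X * Real.exp (Real.sqrt α * X) / X) Filter.atTop
      (nhds (-h₀ / (2 * Real.sqrt α))) := by
  obtain ⟨C, hC1, hC2⟩ := hdecay
  set s := Real.sqrt α with hsdef
  have hs : 0 < s := Real.sqrt_pos.mpr hα
  have hs2 : s * s = α := Real.mul_self_sqrt hα.le
  have hC0 : 0 ≤ C := le_trans (abs_nonneg _) (by simpa using hC1 0 le_rfl)
  -- limit of h * vu
  have hhvu : Filter.Tendsto (fun t => h t * vu t) Filter.atTop
      (nhds (h₀ * (1/(2*α*β)))) := by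
    refine (hhlim.mul hvulim).congr (fun t => ?_)
    have e1 : Real.exp (s * t) * Real.exp (-s * t) = 1 := by
      rw [← Real.exp_add, neg_mul, add_neg_cancel, Real.exp_zero]
    linear_combination h t * vu t * e1
  have T1 := cesaro_int_aux (fun t => h t * vu t) (hh.mul hvu.continuous) _ hhvu
  -- tail bound for the Iic-integral
  have htail : ∀ X ≥ (0:ℝ), |∫ t in Set.Iic X, h t * vb t| ≤
      C^2/(2*s) * Real.exp (-(2*s)*X) := by
    intro X hX
    have hIic : ∫ t in Set.Iic X, h t * vb t = -∫ t in Set.Ioi X, h t * vb t := by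
      have := intervalIntegral.integral_Iic_add_Ioi (b := X) (μ := volume)
        hint2.integrableOn hint2.integrableOn
      rw [hMh] at this; linarith
    rw [hIic, abs_neg]
    have hb2s : (0:ℝ) < 2*s := by positivity
    calc |∫ t in Set.Ioi X, h t * vb t|
        ≤ ∫ t in Set.Ioi X, |h t| * |vb t| := by
          simpa [Real.norm_eq_abs, abs_mul] using
            norm_integral_le_integral_norm (μ := volume.restrict (Set.Ioi X))
              (fun t => h t * vb t)
      _ ≤ ∫ t in Set.Ioi X, C^2 * Real.exp (-(2*s)*t) := by
          refine setIntegral_mono_on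
            (hint2.abs.congr (Filter.Eventually.of_forall fun t => (abs_mul _ _))).integrableOn
            ((exp_neg_integrableOn_Ioi X hb2s).const_mul _) measurableSet_Ioi ?_
          intro t ht
          have ht0 : (0:ℝ) ≤ t := le_trans hX (le_of_lt ht)
          calc |h t| * |vb t| ≤ (C * Real.exp (-s*t)) * (C * Real.exp (-s*t)) :=
                mul_le_mul (hC1 t ht0) (hC2 t ht0) (abs_nonneg _) (by positivity)
            _ = C^2 * Real.exp (-(2*s)*t) := by
                rw [show (-(2*s)*t) = (-s*t) + (-s*t) by ring, Real.exp_add]; ring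
      _ = C^2/(2*s) * Real.exp (-(2*s)*X) := by
          rw [MeasureTheory.integral_const_mul, exp_integral_Ioi_aux (2*s) X hb2s]
          ring
  -- second term tends to zero
  have T2 : Filter.Tendsto
      (fun X => (∫ t in Set.Iic X, h t * vb t) * Real.exp (2*s*X) / X)
      Filter.atTop (nhds 0) := by
    rw [tendsto_zero_iff_abs_tendsto_zero]
    have hg : Filter.Tendsto (fun X : ℝ => (C^2/(2*s)) / X) Filter.atTop (nhds 0) :=
      tendsto_const_nhds.div_atTop Filter.tendsto_id
    refine squeeze_zero' (Filter.Eventually.of_forall (fun X => abs_nonneg _)) ?_ hg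
    filter_upwards [Filter.eventually_ge_atTop (1:ℝ)] with X hX1
    have hXpos : (0:ℝ) < X := by linarith
    calc |(∫ t in Set.Iic X, h t * vb t) * Real.exp (2*s*X) / X|
        = |∫ t in Set.Iic X, h t * vb t| * Real.exp (2*s*X) / X := by
          rw [abs_div, abs_mul, abs_of_pos (Real.exp_pos _), abs_of_pos hXpos]
      _ ≤ (C^2/(2*s) * Real.exp (-(2*s)*X)) * Real.exp (2*s*X) / X := by
          gcongr
          exact htail X (by linarith)
      _ = (C^2/(2*s)) / X := by
          rw [mul_assoc, ← Real.exp_add, show -(2*s)*X + 2*s*X = 0 by ring,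
            Real.exp_zero, mul_one]
  have T2full : Filter.Tendsto
      (fun X => ((∫ t in Set.Iic X, h t * vb t) * Real.exp (2*s*X) / X) *
        (vu X * Real.exp (-s*X))) Filter.atTop (nhds 0) := by
    simpa using T2.mul hvulim
  -- combine
  have Tmain := ((T1.neg).mul hvblim).add T2full
  have hval : -(h₀ * (1/(2*α*β))) * (β*s) + 0 = -h₀/(2*s) := by
    rw [← hs2]; field_simp; ring
  rw [hval] at Tmain
  refine Filter.Tendsto.congr' ?_ Tmain
  filter_upwards [Filter.eventually_gt_atTop (0:ℝ)] with X hX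
  rw [hv X]
  rw [show Real.exp (2*s*X) = Real.exp (s*X) * Real.exp (s*X) by
      rw [← Real.exp_add]; congr 1; ring,
    show Real.exp (-s*X) = (Real.exp (s*X))⁻¹ by
      rw [← Real.exp_neg]; congr 1; ring]
  have hE := Real.exp_ne_zero (s*X)
  field_simp
end

section
/- Let W : ℝ → ℝ be three times continuously differentiable with W'(V̄) = 0 and W''(V̄) = α > 0, and let v : ℝ → ℝ be a twice continuously differentiable solution of v''(X) = W'(v(X)) with v'(X) > 0 for all X, lim_{X→∞} v(X) = V̄ and lim_{X→∞} v'(X) = 0. Then there exists β > 0 such that lim_{X→∞} (V̄ − v(X)) e^{√α X} = β and lim_{X→∞} v'(X) e^{√α X} = β√α. -/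
open Filter Real Set

lemma abs_sub_le_of_uIcc' {a b z : ℝ} (h : z ∈ Set.uIcc a b) : |z - a| ≤ |b - a| := by
  rcases le_total a b with hab | hab
  · rw [Set.uIcc_of_le hab] at h
    rw [abs_of_nonneg (by linarith [h.1]), abs_of_nonneg (by linarith)]
    linarith [h.2]
  · rw [Set.uIcc_of_ge hab] at h
    rw [abs_of_nonpos (by linarith [h.2]), abs_of_nonpos (by linarith)]
    linarith [h.1]

lemma stmt8_taylor (W : ℝ → ℝ) (Vbar α : ℝ) (hW : ContDiff ℝ 3 W)
    (hW' : deriv W Vbar = 0) (hα : deriv (deriv W) Vbar = α) :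
    ∃ K > (0:ℝ), ∃ δ > (0:ℝ), ∀ y, |y - Vbar| ≤ δ →
      |W y - W Vbar - α * (y - Vbar)^2 / 2| ≤ K * |y - Vbar|^3 := by
  have hW1 : ContDiff ℝ 2 (deriv W) := by
    have h3 : ContDiff ℝ (2+1) W := by norm_num at hW ⊢; exact hW
    exact (contDiff_succ_iff_deriv.mp h3).2.2
  have hW2 : ContDiff ℝ 1 (deriv (deriv W)) := by
    have h2 : ContDiff ℝ (1+1) (deriv W) := by norm_num at hW1 ⊢; exact hW1
    exact (contDiff_succ_iff_deriv.mp h2).2.2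
  have hWd : Differentiable ℝ W := hW.differentiable (by norm_num)
  have hW1d : Differentiable ℝ (deriv W) := hW1.differentiable (by norm_num)
  obtain ⟨K0, t, ht, hlip⟩ := (hW2.contDiffAt (x := Vbar)).exists_lipschitzOnWith
  obtain ⟨ε, hεpos, hball⟩ := Metric.mem_nhds_iff.mp ht
  set δ : ℝ := ε / 2 with hδdef
  have hδpos : 0 < δ := by positivity
  set K : ℝ := (K0 : ℝ) + 1 with hKdef
  have hKpos : 0 < K := by positivity
  refine ⟨K, hKpos, δ, hδpos, ?_⟩
  -- step 1 : second-derivative bound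
  have hstep1 : ∀ z : ℝ, |z - Vbar| ≤ δ → |deriv (deriv W) z - α| ≤ K * |z - Vbar| := by
    intro z hz
    have hz' : z ∈ Metric.ball Vbar ε := by
      rw [Metric.mem_ball, Real.dist_eq]; linarith
    have h := hlip.dist_le_mul z (hball hz') Vbar (hball (Metric.mem_ball_self hεpos))
    rw [Real.dist_eq] at h
    rw [← hα]
    calc |deriv (deriv W) z - deriv (deriv W) Vbar| ≤ (K0:ℝ) * |z - Vbar| := h
      _ ≤ K * |z - Vbar| := by
          apply mul_le_mul_of_nonneg_right _ (abs_nonneg _)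
          simp [hKdef]
  -- function g
  set g : ℝ → ℝ := fun y => deriv W y - α * (y - Vbar) with hgdef
  have hg0 : g Vbar = 0 := by simp [hgdef, hW']
  have hgderiv : ∀ y : ℝ, HasDerivAt g (deriv (deriv W) y - α) y := by
    intro y
    have h1 : HasDerivAt (deriv W) (deriv (deriv W) y) y := (hW1d y).hasDerivAt
    have h2 : HasDerivAt (fun y => α * (y - Vbar)) (α * 1) y :=
      ((hasDerivAt_id y).sub_const Vbar).const_mul α
    have h3 := h1.sub h2
    rw [mul_one] at h3
    exact h3
  have hstep2 : ∀ y : ℝ, |y - Vbar| ≤ δ → |g y| ≤ K * |y - Vbar| * |y - Vbar| := by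
    intro y hy
    have := Convex.norm_image_sub_le_of_norm_deriv_le (f := g)
      (s := Set.uIcc Vbar y) (C := K * |y - Vbar|)
      (fun z _ => (hgderiv z).differentiableAt)
      (fun z hz => by
        rw [(hgderiv z).deriv, Real.norm_eq_abs]
        calc |deriv (deriv W) z - α| ≤ K * |z - Vbar| :=
              hstep1 z (le_trans (abs_sub_le_of_uIcc' hz) hy)
          _ ≤ K * |y - Vbar| := by
              exact mul_le_mul_of_nonneg_left (abs_sub_le_of_uIcc' hz) hKpos.le)
      (convex_uIcc _ _) (Set.left_mem_uIcc) (Set.right_mem_uIcc)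
    rw [hg0, sub_zero, Real.norm_eq_abs, Real.norm_eq_abs] at this
    exact this
  -- function F
  intro y hy
  set F : ℝ → ℝ := fun y => W y - W Vbar - α * (y - Vbar)^2 / 2 with hFdef
  have hF0 : F Vbar = 0 := by simp [hFdef]
  have hFderiv : ∀ z : ℝ, HasDerivAt F (g z) z := by
    intro z
    have h1 : HasDerivAt W (deriv W z) z := (hWd z).hasDerivAt
    have h2 : HasDerivAt (fun y : ℝ => α * (y - Vbar)^2 / 2)
        (α * (2 * (z - Vbar)^1 * 1) / 2) z :=
      ((((hasDerivAt_id z).sub_const Vbar).pow 2).const_mul α).div_const 2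
    have := (h1.sub_const (W Vbar)).sub h2
    exact this.congr_deriv (by simp only [hgdef]; ring)
  have := Convex.norm_image_sub_le_of_norm_deriv_le (f := F)
    (s := Set.uIcc Vbar y) (C := K * |y - Vbar| * |y - Vbar|)
    (fun z _ => (hFderiv z).differentiableAt)
    (fun z hz => by
      rw [(hFderiv z).deriv, Real.norm_eq_abs]
      calc |g z| ≤ K * |z - Vbar| * |z - Vbar| :=
            hstep2 z (le_trans (abs_sub_le_of_uIcc' hz) hy)
        _ ≤ K * |y - Vbar| * |y - Vbar| := by
            have h := abs_sub_le_of_uIcc' hz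
            have h0 := abs_nonneg (z - Vbar)
            exact mul_le_mul (mul_le_mul_of_nonneg_left h hKpos.le) h h0 (by positivity))
    (convex_uIcc _ _) (Set.left_mem_uIcc) (Set.right_mem_uIcc)
  rw [hF0, sub_zero, Real.norm_eq_abs, Real.norm_eq_abs] at this
  calc |F y| ≤ K * |y - Vbar| * |y - Vbar| * |y - Vbar| := this
    _ = K * |y - Vbar|^3 := by ring
/-- exponential approach to a nondegenerate saddle: an increasing solution
of `v'' = W'(v)` converging to `V̄` (with `W'(V̄) = 0`, `W''(V̄) = α > 0`) satisfies
`V̄ - v(X) ~ β e^{-√α X}` and `v'(X) ~ β√α e^{-√α X}` as `X → ∞` for some `β > 0`. -/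
theorem stmt_8 (W v : ℝ → ℝ) (Vbar α : ℝ)
    (hW : ContDiff ℝ 3 W) (hW' : deriv W Vbar = 0)
    (hα : deriv (deriv W) Vbar = α) (hαpos : 0 < α)
    (hv : ContDiff ℝ 2 v)
    (hode : ∀ X, deriv (deriv v) X = deriv W (v X))
    (hpos : ∀ X, 0 < deriv v X)
    (hlim : Filter.Tendsto v Filter.atTop (nhds Vbar))
    (hlim' : Filter.Tendsto (deriv v) Filter.atTop (nhds 0)) :
    ∃ β > (0:ℝ),
      Filter.Tendsto (fun X => (Vbar - v X) * Real.exp (Real.sqrt α * X)) Filter.atTop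
        (nhds β) ∧
      Filter.Tendsto (fun X => deriv v X * Real.exp (Real.sqrt α * X)) Filter.atTop
        (nhds (β * Real.sqrt α)) := by
  obtain ⟨K, hKpos, δ0, hδ0pos, htaylor⟩ := stmt8_taylor W Vbar α hW hW' hα
  obtain ⟨a, hadef⟩ : ∃ a : ℝ, a = Real.sqrt α := ⟨_, rfl⟩
  rw [← hadef]
  have ha : 0 < a := hadef ▸ Real.sqrt_pos.mpr hαpos
  have ha2 : a^2 = α := hadef ▸ Real.sq_sqrt hαpos.le
  -- differentiability
  have hWd : Differentiable ℝ W := hW.differentiable (by norm_num)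
  have hvd : Differentiable ℝ v := hv.differentiable (by norm_num)
  have hv1 : ContDiff ℝ 1 (deriv v) := by
    have h2 : ContDiff ℝ (1+1) v := by norm_num at hv ⊢; exact hv
    exact (contDiff_succ_iff_deriv.mp h2).2.2
  have hv'd : Differentiable ℝ (deriv v) := hv1.differentiable (by norm_num)
  have hv'c : Continuous (deriv v) := hv1.continuous
  -- energy identity
  have energy : ∀ X, (deriv v X)^2 = 2*(W (v X) - W Vbar) := by
    set E : ℝ → ℝ := fun X => (deriv v X)^2/2 - W (v X) with hEdef
    have hEderiv : ∀ X, HasDerivAt E 0 X := by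
      intro X
      have h1 : HasDerivAt (deriv v) (deriv (deriv v) X) X := (hv'd X).hasDerivAt
      have h2 : HasDerivAt (fun X => (deriv v X)^2/2)
          (2*(deriv v X)^1 * deriv (deriv v) X / 2) X := (h1.pow 2).div_const 2
      have h3 : HasDerivAt (fun X => W (v X)) (deriv W (v X) * deriv v X) X :=
        ((hWd (v X)).hasDerivAt).comp X ((hvd X).hasDerivAt)
      have h4 := h2.sub h3
      exact h4.congr_deriv (by rw [hode X]; ring)
    have hconst : ∀ X, E X = E 0 := fun X =>
      is_const_of_deriv_eq_zero (fun Y => (hEderiv Y).differentiableAt)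
        (fun Y => (hEderiv Y).deriv) X 0
    have hElim : Tendsto E atTop (nhds ((0:ℝ)^2/2 - W Vbar)) :=
      ((hlim'.pow 2).div_const 2).sub ((hWd.continuous.tendsto Vbar).comp hlim)
    have hE0 : E 0 = (0:ℝ)^2/2 - W Vbar := by
      refine tendsto_nhds_unique ?_ hElim
      exact Tendsto.congr (fun X => (hconst X).symm) tendsto_const_nhds
    intro X
    have h5 := hconst X
    rw [hE0] at h5
    simp only [hEdef] at h5
    nlinarith [h5]
  -- v < Vbar
  have hmono : StrictMono v := strictMono_of_deriv_pos hpos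
  have hvlt : ∀ X, v X < Vbar := by
    intro X
    have h1 : v (X+1) ≤ Vbar := by
      apply ge_of_tendsto hlim
      filter_upwards [eventually_ge_atTop (X+1)] with Y hY
      exact hmono.monotone hY
    linarith [hmono (lt_add_one X)]
  obtain ⟨u, hudef⟩ : ∃ u : ℝ → ℝ, u = fun X => Vbar - v X := ⟨_, rfl⟩
  have huX : ∀ X, u X = Vbar - v X := fun X => by rw [hudef]
  have hupos : ∀ X, 0 < u X := fun X => by rw [huX X]; exact sub_pos.mpr (hvlt X)
  have hucont : Continuous u := by
    rw [hudef]; exact continuous_const.sub hvd.continuous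
  have hulim : Tendsto u atTop (nhds 0) := by
    rw [hudef]
    have h := (tendsto_const_nhds (x := Vbar) (f := atTop)).sub hlim
    simpa using h
  have hu' : ∀ X, HasDerivAt u (-(deriv v X)) X := fun X => by
    rw [hudef]; exact ((hvd X).hasDerivAt).const_sub Vbar
  -- quadratic estimate
  set δ1 := min δ0 (α/(4*K)) with hδ1
  have hδ1pos : 0 < δ1 := lt_min hδ0pos (by positivity)
  have hquad : ∀ X, u X ≤ δ1 → |(deriv v X)^2 - α * (u X)^2| ≤ 2*K*(u X)^3 := by
    intro X hX
    have hneg : v X - Vbar = -(u X) := by rw [huX X]; ring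
    have habs : |v X - Vbar| = u X := by
      rw [hneg, abs_neg, abs_of_pos (hupos X)]
    have h1 := htaylor (v X) (by rw [habs]; exact le_trans hX (min_le_left _ _))
    rw [habs] at h1
    have h2 : (v X - Vbar)^2 = (u X)^2 := by rw [hneg]; ring
    rw [h2] at h1
    rw [energy X]
    rw [show 2*(W (v X) - W Vbar) - α*(u X)^2
        = 2*(W (v X) - W Vbar - α*(u X)^2/2) from by ring, abs_mul, abs_two]
    linarith
  -- lower bound on deriv v
  have hlow : ∀ X, u X ≤ δ1 → (a/2) * u X ≤ deriv v X := by
    intro X hX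
    have h1 := hquad X hX
    have h2 : 2*K*(u X)^3 ≤ (α/2) * (u X)^2 := by
      have h3 : u X ≤ α/(4*K) := le_trans hX (min_le_right _ _)
      have h3' : 2*K*u X ≤ α/2 := by
        rw [le_div_iff₀ (by positivity)] at h3
        nlinarith [h3]
      nlinarith [h3', sq_nonneg (u X)]
    have h5 : (α/2) * (u X)^2 ≤ (deriv v X)^2 := by
      nlinarith [(abs_le.mp h1).1, h2]
    have e4 : ((a/2) * u X)^2 = (α/4)*(u X)^2 := by
      rw [mul_pow, div_pow, ha2]; ring
    have h4 : ((a/2) * u X)^2 ≤ (deriv v X)^2 := by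
      rw [e4]
      have := mul_nonneg hαpos.le (sq_nonneg (u X))
      linarith
    nlinarith [hpos X, hupos X, ha, sq_nonneg ((a/2)*u X - deriv v X), h4]
  -- closeness estimate
  have hclose : ∀ X, u X ≤ δ1 → |deriv v X - a * u X| ≤ (2*K/a) * (u X)^2 := by
    intro X hX
    have h1 := hquad X hX
    have hsum : 0 < deriv v X + a * u X := by
      have := hpos X; have := hupos X; positivity
    have h2 : |deriv v X - a * u X| * (deriv v X + a * u X)
        = |(deriv v X)^2 - α * (u X)^2| := by
      rw [← abs_of_pos hsum, ← abs_mul]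
      congr 1
      nlinarith [ha2]
    rw [← mul_le_mul_iff_of_pos_right (mul_pos ha (hupos X))]
    calc |deriv v X - a * u X| * (a * u X)
        ≤ |deriv v X - a * u X| * (deriv v X + a * u X) := by
          apply mul_le_mul_of_nonneg_left _ (abs_nonneg _)
          linarith [hpos X]
      _ = |(deriv v X)^2 - α * (u X)^2| := h2
      _ ≤ 2*K*(u X)^3 := h1
      _ = (2*K/a) * (u X)^2 * (a * u X) := by field_simp
  -- choose X₀
  obtain ⟨X₀, hX₀⟩ := eventually_atTop.mp (hulim.eventually_lt_const hδ1pos)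
  have hX₀' : ∀ X ≥ X₀, u X ≤ δ1 := fun X hX => (hX₀ X hX).le
  -- decay estimate via monotone auxiliary function
  set g : ℝ → ℝ := fun X => u X * Real.exp ((a/2)*X) with hgdef
  have hgpos : ∀ X, 0 < g X := fun X => mul_pos (hupos X) (Real.exp_pos _)
  have hgderiv : ∀ X, HasDerivAt g
      (-(deriv v X) * Real.exp ((a/2)*X) + u X * ((a/2) * Real.exp ((a/2)*X))) X := by
    intro X
    have hlin : HasDerivAt (fun X : ℝ => (a/2)*X) (a/2) X := by
      simpa using (hasDerivAt_id X).const_mul (a/2)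
    have hexp := hlin.exp
    exact ((hu' X).mul hexp).congr_deriv (by ring)
  have hganti : AntitoneOn g (Set.Ici X₀) := by
    apply antitoneOn_of_deriv_nonpos (convex_Ici X₀)
    · exact Continuous.continuousOn
        (hucont.mul (Real.continuous_exp.comp (continuous_const.mul continuous_id)))
    · intro X hX
      exact ((hgderiv X).differentiableAt).differentiableWithinAt
    · intro X hX
      rw [interior_Ici] at hX
      rw [(hgderiv X).deriv]
      have h1 := hlow X (hX₀' X (le_of_lt hX))
      have h2 := Real.exp_pos ((a/2)*X)
      nlinarith [h2.le]
  have hdecay : ∀ X ≥ X₀, u X ≤ g X₀ * Real.exp (-(a/2)*X) := by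
    intro X hX
    have h1 : g X ≤ g X₀ := hganti (Set.self_mem_Ici) hX hX
    have h2 : u X = g X * Real.exp (-(a/2)*X) := by
      simp only [hgdef]
      rw [mul_assoc, ← Real.exp_add]
      simp
    rw [h2]
    exact mul_le_mul_of_nonneg_right h1 (Real.exp_pos _).le
  -- the logarithmic derivative
  set φ : ℝ → ℝ := fun X => a - deriv v X / u X with hφdef
  set L : ℝ → ℝ := fun X => Real.log (u X) + a*X with hLdef
  have hLderiv : ∀ X, HasDerivAt L (φ X) X := by
    intro X
    have hlog : HasDerivAt (fun X => Real.log (u X)) (-(deriv v X) / u X) X :=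
      (hu' X).log (hupos X).ne'
    have hid : HasDerivAt (fun X : ℝ => a*X) a X := by
      simpa using (hasDerivAt_id X).const_mul a
    have := hlog.add hid
    exact this.congr_deriv (by simp only [hφdef]; ring)
  have hφcont : Continuous φ :=
    continuous_const.sub (hv'c.div hucont (fun X => (hupos X).ne'))
  set C2 : ℝ := (2*K/a) * g X₀ with hC2def
  have hC2pos : 0 < C2 := by
    apply mul_pos _ (hgpos X₀)
    positivity
  have hφbound : ∀ X ≥ X₀, |φ X| ≤ C2 * Real.exp (-(a/2)*X) := by
    intro X hX
    have h1 : φ X = -((deriv v X - a * u X)/u X) := by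
      simp only [hφdef]
      rw [← neg_div, neg_sub, sub_div, mul_div_assoc, div_self (hupos X).ne', mul_one]
    rw [h1, abs_neg, abs_div, abs_of_pos (hupos X)]
    rw [div_le_iff₀ (hupos X)]
    calc |deriv v X - a * u X| ≤ (2*K/a) * (u X)^2 := hclose X (hX₀' X hX)
      _ = ((2*K/a) * u X) * u X := by ring
      _ ≤ ((2*K/a) * (g X₀ * Real.exp (-(a/2)*X))) * u X := by
          apply mul_le_mul_of_nonneg_right _ (hupos X).le
          apply mul_le_mul_of_nonneg_left (hdecay X hX) (by positivity)
      _ = C2 * Real.exp (-(a/2)*X) * u X := by rw [hC2def]; ring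
  -- integrability of φ on Ioi X₀
  have hint : MeasureTheory.IntegrableOn φ (Set.Ioi X₀) := by
    apply MeasureTheory.Integrable.mono'
      ((exp_neg_integrableOn_Ioi X₀ (half_pos ha)).const_mul C2)
      hφcont.aestronglyMeasurable
    rw [MeasureTheory.ae_restrict_iff' measurableSet_Ioi]
    apply MeasureTheory.ae_of_all
    intro X hX
    rw [Real.norm_eq_abs]
    exact hφbound X (le_of_lt hX)
  -- FTC
  have hFTC : ∀ X, X₀ ≤ X → L X = L X₀ + ∫ t in X₀..X, φ t := by
    intro X hX
    have h1 := intervalIntegral.integral_eq_sub_of_hasDerivAt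
      (f := L) (f' := φ) (a := X₀) (b := X)
      (fun t ht => hLderiv t) (hφcont.intervalIntegrable X₀ X)
    linarith [h1]
  have hIlim : Tendsto (fun X => ∫ t in X₀..X, φ t) atTop
      (nhds (∫ t in Set.Ioi X₀, φ t)) :=
    MeasureTheory.intervalIntegral_tendsto_integral_Ioi X₀ hint tendsto_id
  set ℓ : ℝ := L X₀ + ∫ t in Set.Ioi X₀, φ t with hℓdef
  have hLlim : Tendsto L atTop (nhds ℓ) := by
    apply Tendsto.congr' _ (tendsto_const_nhds.add hIlim)
    filter_upwards [eventually_ge_atTop X₀] with X hX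
    exact (hFTC X hX).symm
  refine ⟨Real.exp ℓ, Real.exp_pos ℓ, ?_, ?_⟩
  · -- first limit
    have h1 : Tendsto (fun X => Real.exp (L X)) atTop (nhds (Real.exp ℓ)) :=
      (Real.continuous_exp.tendsto ℓ).comp hLlim
    apply h1.congr
    intro X
    simp only [hLdef]
    rw [Real.exp_add, Real.exp_log (hupos X), huX X]
  · -- second limit
    have hratio : Tendsto (fun X => deriv v X / u X) atTop (nhds a) := by
      have h0 : Tendsto (fun X => deriv v X / u X - a) atTop (nhds 0) := by
        have hb : ∀ᶠ X in atTop, ‖deriv v X / u X - a‖ ≤ (2*K/a) * u X := by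
          filter_upwards [eventually_ge_atTop X₀] with X hX
          rw [Real.norm_eq_abs, abs_sub_comm]
          have h1 : a - deriv v X / u X = φ X := rfl
          rw [h1]
          have h2 : |φ X| = |deriv v X - a * u X| / u X := by
            have h3 : φ X = -((deriv v X - a * u X)/u X) := by
              simp only [hφdef]
              rw [← neg_div, neg_sub, sub_div, mul_div_assoc, div_self (hupos X).ne', mul_one]
            rw [h3, abs_neg, abs_div, abs_of_pos (hupos X)]
          rw [h2, div_le_iff₀ (hupos X)]
          calc |deriv v X - a * u X| ≤ (2*K/a) * (u X)^2 := hclose X (hX₀' X hX)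
            _ = (2*K/a) * u X * u X := by ring
        exact squeeze_zero_norm' hb (by simpa using hulim.const_mul (2*K/a))
      have := h0.add_const a
      simpa using this
    have huexp : Tendsto (fun X => u X * Real.exp (a*X)) atTop (nhds (Real.exp ℓ)) := by
      have h1 : Tendsto (fun X => Real.exp (L X)) atTop (nhds (Real.exp ℓ)) :=
        (Real.continuous_exp.tendsto ℓ).comp hLlim
      apply h1.congr
      intro X
      simp only [hLdef]
      rw [Real.exp_add, Real.exp_log (hupos X)]
    have hmul := hratio.mul huexp
    rw [mul_comm a (Real.exp ℓ)] at hmul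
    apply hmul.congr
    intro X
    calc deriv v X / u X * (u X * Real.exp (a*X))
        = deriv v X * Real.exp (a*X) * (u X / u X) := by ring
      _ = deriv v X * Real.exp (a*X) := by rw [div_self (hupos X).ne', mul_one]
end
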